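/- Let b_ℓ be the Sylvester sequence for 1, i.e., b_1 = 2 and b_{ℓ+1} = b_ℓ(b_ℓ − 1) + 1. Then ∑_{ℓ=1}^∞ log(1 + b_ℓ²)/b_ℓ < 5/2. -/
import Mathlib


/-- The Sylvester sequence of 1: `2, 3, 7, 43, 1807, …`. -/
def sylvOne : ℕ → ℕ
  | 0 => 2
  | n + 1 => sylvOne n * (sylvOne n - 1) + 1

lemma sylv_two_le (n : ℕ) : 2 ≤ sylvOne n := by
  induction n with
  | zero => simp [sylvOne]
  | succ n ih =>
    show 2 ≤ sylvOne n * (sylvOne n - 1) + 1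
    have h1 : 1 ≤ sylvOne n - 1 := by omega
    have := Nat.mul_le_mul ih h1
    omega

lemma sylv_lower (n : ℕ) : 3263443 * 4 ^ n ≤ sylvOne (n + 5) := by
  induction n with
  | zero => norm_num [sylvOne]
  | succ n ih =>
    show 3263443 * 4 ^ (n+1) ≤ sylvOne (n + 5) * (sylvOne (n+5) - 1) + 1
    have h5 : 5 ≤ sylvOne (n + 5) := by
      have h1 : 1 ≤ 4 ^ n := Nat.one_le_pow _ _ (by norm_num)
      have : 3263443 * 1 ≤ 3263443 * 4 ^ n := Nat.mul_le_mul_left _ h1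
      omega
    have h4 : 4 ≤ sylvOne (n + 5) - 1 := by omega
    have hmul : (3263443 * 4 ^ n) * 4 ≤ sylvOne (n+5) * (sylvOne (n+5) - 1) :=
      Nat.mul_le_mul ih h4
    calc 3263443 * 4 ^ (n+1) = (3263443 * 4 ^ n) * 4 := by ring
    _ ≤ sylvOne (n+5) * (sylvOne (n+5) - 1) := hmul
    _ ≤ _ := Nat.le_succ _

lemma log_le_div (x : ℝ) (p q : ℕ) (hq : 0 < q) (hx : 0 < x)
    (h : x ^ q ≤ 2.718281828 ^ p) : Real.log x ≤ p / q := by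
  have he : (2.718281828 : ℝ) ≤ Real.exp 1 := by
    have := Real.exp_one_gt_d9; norm_num at this ⊢; linarith
  have h2 : (2.718281828 : ℝ) ^ p ≤ Real.exp 1 ^ p :=
    pow_le_pow_left₀ (by norm_num) he p
  have h3 : x ^ q ≤ Real.exp p := by
    calc x ^ q ≤ Real.exp 1 ^ p := le_trans h h2
    _ = Real.exp p := by rw [← Real.exp_nat_mul]; norm_num
  have h4 : Real.log (x ^ q) ≤ p := by
    rw [Real.log_le_iff_le_exp (by positivity)]; exact h3
  rw [Real.log_pow] at h4
  rw [le_div_iff₀ (by positivity)]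
  nlinarith [h4]

theorem sum_log_one_add_sq_div_sylvOne_lt :
    Summable (fun ℓ : ℕ => Real.log (1 + (sylvOne ℓ : ℝ)^2) / (sylvOne ℓ : ℝ)) ∧
    ∑' ℓ : ℕ, Real.log (1 + (sylvOne ℓ : ℝ)^2) / (sylvOne ℓ : ℝ) < 5 / 2 := by
  set f : ℕ → ℝ := fun ℓ => Real.log (1 + (sylvOne ℓ : ℝ)^2) / (sylvOne ℓ : ℝ) with hf
  have hpos : ∀ ℓ, 0 < (sylvOne ℓ : ℝ) := fun ℓ => by
    have := sylv_two_le ℓ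
    have : (2:ℝ) ≤ (sylvOne ℓ : ℝ) := by exact_mod_cast this
    linarith
  have hnn : ∀ ℓ, 0 ≤ f ℓ := fun ℓ => by
    apply div_nonneg _ (le_of_lt (hpos ℓ))
    apply Real.log_nonneg; nlinarith [sq_nonneg ((sylvOne ℓ : ℝ))]
  -- tail bound
  have htail : ∀ n, f (n + 5) ≤ (1/301) * (1/2) ^ n := by
    intro n
    set B : ℝ := (sylvOne (n+5) : ℝ) with hB
    have hB2 : (2:ℝ) ≤ B := by rw [hB]; exact_mod_cast sylv_two_le (n+5)
    have hBlow : (3263443:ℝ) * 4 ^ n ≤ B := by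
      have h := Nat.cast_le (α := ℝ) |>.mpr (sylv_lower n)
      push_cast at h
      rw [hB]; convert h using 2
    have hBpos : 0 < B := by linarith
    have hp4 : (0:ℝ) < 4 ^ n := by positivity
    have hsq : (1806 : ℝ) * 2 ^ n ≤ Real.sqrt B := by
      rw [show (1806:ℝ) * 2 ^ n = Real.sqrt ((1806 * 2^n)^2) by
        rw [Real.sqrt_sq (by positivity)]]
      apply Real.sqrt_le_sqrt
      have h44 : (4:ℝ)^n = 2^n * 2^n := by rw [← mul_pow]; norm_num
      calc ((1806:ℝ) * 2^n)^2 = 3261636 * 4 ^ n := by rw [h44]; ring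
      _ ≤ 3263443 * 4 ^ n := by nlinarith
      _ ≤ B := hBlow
    have hsqpos : 0 < Real.sqrt B := Real.sqrt_pos.mpr hBpos
    have hlog : Real.log (1 + B^2) ≤ 6 * Real.sqrt B := by
      have h1 : Real.log (1 + B^2) ≤ Real.log (B^3) := by
        apply Real.log_le_log (by positivity)
        nlinarith
      have h2 : Real.log (B^3) = 3 * Real.log B := by
        rw [show B^3 = B^(3:ℕ) by norm_num, Real.log_pow]; norm_num
      have h3 : Real.log B ≤ 2 * Real.sqrt B := by
        have heq : Real.log B = 2 * Real.log (Real.sqrt B) := by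
          conv_lhs => rw [← Real.sq_sqrt (le_of_lt hBpos)]
          rw [show Real.sqrt B ^ 2 = Real.sqrt B ^ (2:ℕ) by norm_num, Real.log_pow]
          norm_num
        have := Real.log_le_sub_one_of_pos hsqpos
        linarith [heq, this]
      linarith
    have hBs : Real.sqrt B * Real.sqrt B = B := Real.mul_self_sqrt (le_of_lt hBpos)
    have step1 : f (n+5) ≤ 6 / Real.sqrt B := by
      show Real.log (1 + B^2) / B ≤ 6 / Real.sqrt B
      rw [div_le_div_iff₀ hBpos hsqpos]
      calc Real.log (1 + B^2) * Real.sqrt B ≤ (6 * Real.sqrt B) * Real.sqrt B := by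
            apply mul_le_mul_of_nonneg_right hlog (le_of_lt hsqpos)
      _ = 6 * B := by rw [mul_assoc, hBs]
    have step2 : 6 / Real.sqrt B ≤ (1/301) * (1/2) ^ n := by
      rw [div_le_iff₀ hsqpos]
      have h2n : (0:ℝ) < (2:ℝ) ^ n := by positivity
      have : (1/301 : ℝ) * (1/2)^n * (1806 * 2^n) ≤ (1/301) * (1/2)^n * Real.sqrt B := by
        apply mul_le_mul_of_nonneg_left hsq (by positivity)
      calc (6:ℝ) = (1/301) * (1/2)^n * (1806 * 2^n) := by
            rw [show ((1/2:ℝ))^n = 1 / 2^n by rw [div_pow]; norm_num]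
            field_simp; ring
      _ ≤ (1/301) * (1/2)^n * Real.sqrt B := this
    exact le_trans step1 step2
  have hgsum : Summable (fun n : ℕ => (1/301 : ℝ) * (1/2) ^ n) :=
    (summable_geometric_of_lt_one (by norm_num) (by norm_num)).mul_left _
  have hts : Summable (fun n => f (n + 5)) :=
    Summable.of_nonneg_of_le (fun n => hnn (n+5)) htail hgsum
  have hsumf : Summable f := (summable_nat_add_iff 5).mp hts
  refine ⟨hsumf, ?_⟩
  have hsplit := Summable.sum_add_tsum_nat_add 5 hsumf
  rw [← hsplit]
  -- tail tsum bound
  have htsum_tail : ∑' n, f (n + 5) ≤ 2/301 := by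
    calc ∑' n, f (n + 5) ≤ ∑' n, (1/301 : ℝ) * (1/2) ^ n :=
          Summable.tsum_le_tsum htail hts hgsum
    _ = (1/301) * (1 - 1/2)⁻¹ := by
          rw [tsum_mul_left, tsum_geometric_of_lt_one (by norm_num) (by norm_num)]
    _ = 2/301 := by norm_num
  -- head bound
  have e0 : sylvOne 0 = 2 := rfl
  have e1 : sylvOne 1 = 3 := rfl
  have e2 : sylvOne 2 = 7 := rfl
  have e3 : sylvOne 3 = 43 := rfl
  have e4 : sylvOne 4 = 1807 := rfl
  have t0 : f 0 ≤ 21 / 13 / 2 := by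
    show Real.log (1 + (sylvOne 0 : ℝ)^2) / (sylvOne 0 : ℝ) ≤ 21 / 13 / 2
    rw [e0]; push_cast
    have := log_le_div 5 21 13 (by norm_num) (by norm_num) (by norm_num)
    rw [show (1:ℝ) + 2^2 = 5 by norm_num]
    rw [div_le_div_iff₀ (by norm_num) (by norm_num)]
    push_cast at this
    linarith
  have t1 : f 1 ≤ 30 / 13 / 3 := by
    show Real.log (1 + (sylvOne 1 : ℝ)^2) / (sylvOne 1 : ℝ) ≤ 30 / 13 / 3
    rw [e1]; push_cast
    have := log_le_div 10 30 13 (by norm_num) (by norm_num) (by norm_num)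
    rw [show (1:ℝ) + 3^2 = 10 by norm_num]
    rw [div_le_div_iff₀ (by norm_num) (by norm_num)]
    push_cast at this
    linarith
  have t2 : f 2 ≤ 51 / 13 / 7 := by
    show Real.log (1 + (sylvOne 2 : ℝ)^2) / (sylvOne 2 : ℝ) ≤ 51 / 13 / 7
    rw [e2]; push_cast
    have := log_le_div 50 51 13 (by norm_num) (by norm_num) (by norm_num)
    rw [show (1:ℝ) + 7^2 = 50 by norm_num]
    rw [div_le_div_iff₀ (by norm_num) (by norm_num)]
    push_cast at this
    linarith
  have t3 : f 3 ≤ 53 / 7 / 43 := by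
    show Real.log (1 + (sylvOne 3 : ℝ)^2) / (sylvOne 3 : ℝ) ≤ 53 / 7 / 43
    rw [e3]; push_cast
    have := log_le_div 1850 53 7 (by norm_num) (by norm_num) (by norm_num)
    rw [show (1:ℝ) + 43^2 = 1850 by norm_num]
    rw [div_le_div_iff₀ (by norm_num) (by norm_num)]
    push_cast at this
    linarith
  have t4 : f 4 ≤ 91 / 6 / 1807 := by
    show Real.log (1 + (sylvOne 4 : ℝ)^2) / (sylvOne 4 : ℝ) ≤ 91 / 6 / 1807
    rw [e4]; push_cast
    have := log_le_div 3265250 91 6 (by norm_num) (by norm_num) (by norm_num)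
    rw [show (1:ℝ) + 1807^2 = 3265250 by norm_num]
    rw [div_le_div_iff₀ (by norm_num) (by norm_num)]
    push_cast at this
    linarith
  have hhead : ∑ i ∈ Finset.range 5, f i ≤ 21/13/2 + 30/13/3 + 51/13/7 + 53/7/43 + 91/6/1807 := by
    rw [Finset.sum_range_succ, Finset.sum_range_succ, Finset.sum_range_succ,
      Finset.sum_range_succ, Finset.sum_range_one]
    linarith
  have : (21:ℝ)/13/2 + 30/13/3 + 51/13/7 + 53/7/43 + 91/6/1807 + 2/301 < 5/2 := by norm_num
  linarith
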